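/- Let $T_\mu : \mathcal{B}(X) \to \mathcal{B}(X)$ be a monotone $\alpha$-contraction with fixed point $J_\mu$, let $J^* \in \mathcal{B}(X)$ satisfy $J^* \le J_\mu$ pointwise, and let $J_0 \in \mathcal{B}(X)$ with $T_\mu J_0 \le J_0$ pointwise. Then $J^* \le J_\mu \le T_\mu^{(\lambda)} J_0 \le T_\mu J_0$ pointwise, where $T_\mu^{(\lambda)}$ is the $\lambda$-operator with $\lambda \in [0,1)$. -/

import Mathlib

open Filter Topology

noncomputable def wnorm {X : Type*} (v : X → ℝ) (J : X → ℝ) : ℝ := ⨆ x, |J x| / v x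

def memB {X : Type*} (v : X → ℝ) (J : X → ℝ) : Prop := ∃ C : ℝ, ∀ x, |J x| / v x ≤ C

lemma memB_sub {X : Type*} (v : X → ℝ) (hv : ∀ x, 0 < v x) {J J' : X → ℝ}
    (h : memB v J) (h' : memB v J') : memB v (fun x => J x - J' x) := by
  obtain ⟨C, hC⟩ := h; obtain ⟨C', hC'⟩ := h'
  refine ⟨C + C', fun x => ?_⟩
  have : |J x - J' x| / v x ≤ |J x| / v x + |J' x| / v x := by
    rw [← add_div]
    exact div_le_div_of_nonneg_right (abs_sub _ _) (hv x).le
  exact this.trans (add_le_add (hC x) (hC' x))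

lemma wnorm_pointwise {X : Type*} (v : X → ℝ) (hv : ∀ x, 0 < v x) {J : X → ℝ}
    (h : memB v J) (x : X) : |J x| ≤ wnorm v J * v x := by
  obtain ⟨C, hC⟩ := h
  have hb : BddAbove (Set.range fun x => |J x| / v x) := ⟨C, by rintro _ ⟨y, rfl⟩; exact hC y⟩
  have := le_ciSup hb x
  rw [div_le_iff₀ (hv x)] at this
  exact this

lemma wnorm_nonneg {X : Type*} [Nonempty X] (v : X → ℝ) (hv : ∀ x, 0 < v x) {J : X → ℝ}
    (h : memB v J) : 0 ≤ wnorm v J := by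
  obtain ⟨x⟩ := ‹Nonempty X›
  have := wnorm_pointwise v hv h x
  nlinarith [abs_nonneg (J x), hv x]

/-- if `T_μ` is a monotone `α`-contraction with fixed point
`J_μ`, `J* ≤ J_μ`, and `T_μ J₀ ≤ J₀`, then
`J* ≤ J_μ ≤ T_μ^{(λ)} J₀ ≤ T_μ J₀` pointwise. -/
theorem stmt13 {X : Type*} [Nonempty X] (v : X → ℝ) (hv : ∀ x, 0 < v x)
    (T : (X → ℝ) → (X → ℝ)) (α : ℝ) (hα : α ∈ Set.Ioo (0 : ℝ) 1)
    (hT : ∀ J, memB v J → memB v (T J))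
    (hcontr : ∀ J J', memB v J → memB v J' →
      wnorm v (fun x => T J x - T J' x) ≤ α * wnorm v (fun x => J x - J' x))
    (hmono : ∀ J J', memB v J → memB v J' → (∀ x, J x ≤ J' x) →
      ∀ x, T J x ≤ T J' x)
    (Jmu : X → ℝ) (hJmu : memB v Jmu) (hfix : T Jmu = Jmu)
    (Jstar : X → ℝ) (hJstar : memB v Jstar) (hle : ∀ x, Jstar x ≤ Jmu x)
    (lam : ℝ) (hlam : lam ∈ Set.Ico (0 : ℝ) 1)
    (J0 : X → ℝ) (hJ0 : memB v J0) (hdec : ∀ x, T J0 x ≤ J0 x) :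
    ∀ x, Jstar x ≤ Jmu x ∧
      Jmu x ≤ (1 - lam) * ∑' ℓ : ℕ, lam ^ ℓ * (T^[ℓ + 1] J0) x ∧
      ((1 - lam) * ∑' ℓ : ℕ, lam ^ ℓ * (T^[ℓ + 1] J0) x) ≤ T J0 x := by
  obtain ⟨hα0, hα1⟩ := hα
  obtain ⟨hl0, hl1⟩ := hlam
  -- memB of iterates
  have hmemBn : ∀ n, memB v (T^[n] J0) := by
    intro n; induction n with
    | zero => exact hJ0
    | succ n ih => rw [Function.iterate_succ_apply']; exact hT _ ih
  -- decreasing iterates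
  have hdecn : ∀ n x, T^[n+1] J0 x ≤ T^[n] J0 x := by
    intro n; induction n with
    | zero => simpa using hdec
    | succ n ih =>
      intro x
      rw [congrFun (Function.iterate_succ_apply' T (n+1) J0) x,
        congrFun (Function.iterate_succ_apply' T n J0) x]
      exact hmono _ _ (hmemBn (n+1)) (hmemBn n) ih x
  have hleT : ∀ n x, T^[n+1] J0 x ≤ T J0 x := by
    intro n; induction n with
    | zero => intro x; simp
    | succ n ih => intro x; exact (hdecn (n+1) x).trans (ih x)
  -- contraction along iterates
  set W := wnorm v (fun x => J0 x - Jmu x) with hWdef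
  have hmemBd : ∀ n, memB v (fun x => T^[n] J0 x - Jmu x) :=
    fun n => memB_sub v hv (hmemBn n) hJmu
  have hcontrn : ∀ n, wnorm v (fun x => T^[n] J0 x - Jmu x) ≤ α ^ n * W := by
    intro n; induction n with
    | zero => simp [hWdef]
    | succ n ih =>
      have heq : (fun x => T^[n+1] J0 x - Jmu x)
          = fun x => T (T^[n] J0) x - T Jmu x := by
        funext x; rw [Function.iterate_succ_apply', hfix]
      rw [heq]
      calc wnorm v (fun x => T (T^[n] J0) x - T Jmu x)
          ≤ α * wnorm v (fun x => T^[n] J0 x - Jmu x) :=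
            hcontr _ _ (hmemBn n) hJmu
        _ ≤ α * (α ^ n * W) := by
            exact mul_le_mul_of_nonneg_left ih hα0.le
        _ = α ^ (n+1) * W := by ring
  -- key: Jmu ≤ T^[n] J0
  have hkey : ∀ n x, Jmu x ≤ T^[n] J0 x := by
    intro n x
    by_contra hcon
    push_neg at hcon
    -- Jmu x - T^[m] J0 x ≤ α^m W v x for m ≥ n, with decreasing iterates
    have hmonot : ∀ m, n ≤ m → T^[m] J0 x ≤ T^[n] J0 x := by
      intro m hm
      induction m with
      | zero => simpa [Nat.le_zero.mp hm]
      | succ m ih =>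
        rcases Nat.lt_or_ge n (m+1) with h | h
        · exact (hdecn m x).trans (ih (Nat.lt_succ_iff.mp h))
        · have : n = m + 1 := le_antisymm hm h
          simp [this]
    have hev : ∀ᶠ m in atTop, Jmu x - T^[n] J0 x ≤ α ^ m * W * v x := by
      filter_upwards [eventually_ge_atTop n] with m hm
      have h1 : Jmu x - T^[n] J0 x ≤ Jmu x - T^[m] J0 x := by
        linarith [hmonot m hm]
      have h2 : Jmu x - T^[m] J0 x ≤ |T^[m] J0 x - Jmu x| := by
        rw [abs_sub_comm]; exact le_abs_self _
      have h3 : |T^[m] J0 x - Jmu x| ≤ (α ^ m * W) * v x := by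
        calc |T^[m] J0 x - Jmu x| ≤ wnorm v (fun x => T^[m] J0 x - Jmu x) * v x :=
              wnorm_pointwise v hv (hmemBd m) x
          _ ≤ (α ^ m * W) * v x :=
              mul_le_mul_of_nonneg_right (hcontrn m) (hv x).le
      linarith
    have htend : Tendsto (fun m : ℕ => α ^ m * W * v x) atTop (𝓝 0) := by
      have : Tendsto (fun m : ℕ => α ^ m) atTop (𝓝 0) :=
        tendsto_pow_atTop_nhds_zero_of_lt_one hα0.le hα1
      simpa using (this.mul_const W).mul_const (v x)
    have := ge_of_tendsto htend hev
    linarith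
  -- summability and tsum computations
  intro x
  refine ⟨hle x, ?_, ?_⟩
  all_goals {
    have hgeo : Summable (fun ℓ : ℕ => lam ^ ℓ) := summable_geometric_of_lt_one hl0 hl1
    have hM : ∀ ℓ : ℕ, |lam ^ ℓ * (T^[ℓ+1] J0) x| ≤ lam ^ ℓ * max |Jmu x| |T J0 x| := by
      intro ℓ
      rw [abs_mul, abs_of_nonneg (pow_nonneg hl0 ℓ)]
      refine mul_le_mul_of_nonneg_left ?_ (pow_nonneg hl0 ℓ)
      refine abs_le.mpr ⟨?_, (hleT ℓ x).trans (le_max_right _ _ |>.trans' (le_abs_self _))⟩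
      calc -(max |Jmu x| |T J0 x|) ≤ -|Jmu x| := by
            simp [le_max_left]
        _ ≤ Jmu x := neg_abs_le _
        _ ≤ T^[ℓ+1] J0 x := hkey (ℓ+1) x
    have hsum : Summable (fun ℓ : ℕ => lam ^ ℓ * (T^[ℓ+1] J0) x) := by
      refine Summable.of_abs (Summable.of_nonneg_of_le (fun ℓ => abs_nonneg _) hM ?_)
      exact hgeo.mul_right _
    have hsumc : ∀ c : ℝ, (1 - lam) * ∑' ℓ : ℕ, lam ^ ℓ * c = c := by
      intro c
      have hne : (1:ℝ) - lam ≠ 0 := by linarith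
      rw [tsum_mul_right, tsum_geometric_of_lt_one hl0 hl1]
      field_simp
    have hsumc' : ∀ c : ℝ, Summable (fun ℓ : ℕ => lam ^ ℓ * c) := fun c => hgeo.mul_right c
    have h1lam : (0:ℝ) ≤ 1 - lam := by linarith
    first
    | · -- Jmu x ≤ λ-sum
        calc Jmu x = (1 - lam) * ∑' ℓ : ℕ, lam ^ ℓ * Jmu x := (hsumc (Jmu x)).symm
          _ ≤ (1 - lam) * ∑' ℓ : ℕ, lam ^ ℓ * (T^[ℓ+1] J0) x := by
              refine mul_le_mul_of_nonneg_left ?_ h1lam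
              refine Summable.tsum_le_tsum (fun ℓ => ?_) (hsumc' _) hsum
              exact mul_le_mul_of_nonneg_left (hkey (ℓ+1) x) (pow_nonneg hl0 ℓ)
    | · -- λ-sum ≤ T J0 x
        calc (1 - lam) * ∑' ℓ : ℕ, lam ^ ℓ * (T^[ℓ+1] J0) x
            ≤ (1 - lam) * ∑' ℓ : ℕ, lam ^ ℓ * (T J0 x) := by
              refine mul_le_mul_of_nonneg_left ?_ h1lam
              refine Summable.tsum_le_tsum (fun ℓ => ?_) hsum (hsumc' _)
              exact mul_le_mul_of_nonneg_left (hleT ℓ x) (pow_nonneg hl0 ℓ)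
          _ = T J0 x := hsumc (T J0 x)
  }
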